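/- For all x ∈ ℝ, the function 𝒲(x) = 𝒱(x)(𝒱(x) + x), where 𝒱(x) = φ(x)/Φ(x) is the inverse Mills ratio, satisfies 0 < 𝒲(x) < 1. -/

import Mathlib

open MeasureTheory

/-- Standard normal density. -/
noncomputable def stdNormalPDF (x : ℝ) : ℝ :=
  (Real.sqrt (2 * Real.pi))⁻¹ * Real.exp (-x ^ 2 / 2)

/-- Standard normal CDF. -/
noncomputable def stdNormalCDF (x : ℝ) : ℝ := ∫ u in Set.Iic x, stdNormalPDF u

section MillsAux

open Real Filter Set Topology

lemma pdf_pos (x : ℝ) : 0 < stdNormalPDF x := by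
  unfold stdNormalPDF
  positivity

lemma pdf_cont : Continuous stdNormalPDF := by
  unfold stdNormalPDF
  continuity

lemma pdf_hasDerivAt (x : ℝ) : HasDerivAt stdNormalPDF (-x * stdNormalPDF x) x := by
  unfold stdNormalPDF
  have h : HasDerivAt (fun x : ℝ => -x ^ 2 / 2) (-x) x := by
    have := ((hasDerivAt_pow 2 x).neg).div_const 2
    refine this.congr_deriv ?_
    ring
  have := (h.exp).const_mul (Real.sqrt (2 * Real.pi))⁻¹
  refine this.congr_deriv ?_
  ring

lemma pdf_integrable : Integrable stdNormalPDF := by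
  have h := (integrable_exp_neg_mul_sq (by norm_num : (0:ℝ) < 1/2)).const_mul
    (Real.sqrt (2 * Real.pi))⁻¹
  refine h.congr ?_
  filter_upwards with x
  unfold stdNormalPDF
  ring_nf

lemma mul_pdf_integrable : Integrable (fun x => x * stdNormalPDF x) := by
  have h := (integrable_mul_exp_neg_mul_sq (by norm_num : (0:ℝ) < 1/2)).const_mul
    (Real.sqrt (2 * Real.pi))⁻¹
  refine h.congr ?_
  filter_upwards with x
  unfold stdNormalPDF
  ring_nf

lemma pdf_tendsto_atBot : Tendsto stdNormalPDF atBot (𝓝 0) := by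
  have h1 : Tendsto (fun x : ℝ => -x ^ 2 / 2) atBot atBot := by
    have h2 : Tendsto (fun x : ℝ => x ^ 2) atBot atTop := by
      have := (tendsto_pow_atTop (n := 2) (by norm_num)).comp
        (tendsto_neg_atBot_atTop (G := ℝ))
      exact this.congr fun x => by simp [Function.comp_apply]
    exact (tendsto_neg_atTop_atBot.comp h2).atBot_div_const (by norm_num)
  have h3 := (Real.tendsto_exp_atBot.comp h1).const_mul (Real.sqrt (2 * Real.pi))⁻¹
  rw [mul_zero] at h3
  exact h3.congr fun x => rfl

lemma aux_atTop : Tendsto (fun u : ℝ => u * Real.exp (-u ^ 2 / 2)) atTop (𝓝 0) := by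
  have h0 : Tendsto (fun u : ℝ => u * Real.exp (-u)) atTop (𝓝 0) := by
    simpa using Real.tendsto_pow_mul_exp_neg_atTop_nhds_zero 1
  apply tendsto_of_tendsto_of_tendsto_of_le_of_le' tendsto_const_nhds h0
  · filter_upwards [eventually_ge_atTop (0:ℝ)] with u hu
    positivity
  · filter_upwards [eventually_ge_atTop (2:ℝ)] with u hu
    have h1 : Real.exp (-u ^ 2 / 2) ≤ Real.exp (-u) := by
      apply Real.exp_le_exp.2; nlinarith
    exact mul_le_mul_of_nonneg_left h1 (by linarith)

lemma x_pdf_tendsto_atBot : Tendsto (fun x => x * stdNormalPDF x) atBot (𝓝 0) := by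
  have h := ((aux_atTop.comp tendsto_neg_atBot_atTop).const_mul
    (Real.sqrt (2 * Real.pi))⁻¹).neg
  have : -((Real.sqrt (2 * Real.pi))⁻¹ * (0:ℝ)) = 0 := by ring
  rw [this] at h
  refine h.congr fun x => ?_
  simp only [Function.comp]
  unfold stdNormalPDF
  ring_nf

lemma integral_id_mul_pdf (x : ℝ) :
    ∫ u in Iic x, u * stdNormalPDF u = -stdNormalPDF x := by
  have h := integral_Iic_of_hasDerivAt_of_tendsto' (a := x)
    (f := fun u => -stdNormalPDF u) (f' := fun u => u * stdNormalPDF u)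
    (fun u _ => (pdf_hasDerivAt u).neg.congr_deriv (by ring))
    (mul_pdf_integrable.integrableOn) (pdf_tendsto_atBot.neg.congr fun x => rfl)
  simpa using h

lemma cdf_nonneg (x : ℝ) : 0 ≤ stdNormalCDF x :=
  setIntegral_nonneg measurableSet_Iic fun u _ => (pdf_pos u).le

lemma cdf_le_of_neg {x : ℝ} (hx : x < 0) : stdNormalCDF x ≤ x⁻¹ * (-stdNormalPDF x) := by
  have hne : x ≠ 0 := ne_of_lt hx
  have h1 : stdNormalCDF x ≤ ∫ u in Iic x, x⁻¹ * (u * stdNormalPDF u) := by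
    apply setIntegral_mono_on pdf_integrable.integrableOn
      ((mul_pdf_integrable.integrableOn).const_mul x⁻¹) measurableSet_Iic
    intro u hu
    have hu' : u ≤ x := hu
    have h2 : 1 ≤ x⁻¹ * u := by
      rw [show x⁻¹ * u = u / x by ring]
      rw [le_div_iff_of_neg hx]
      linarith
    calc stdNormalPDF u = 1 * stdNormalPDF u := by ring
    _ ≤ (x⁻¹ * u) * stdNormalPDF u := by
        apply mul_le_mul_of_nonneg_right h2 (pdf_pos u).le
    _ = x⁻¹ * (u * stdNormalPDF u) := by ring
  rw [integral_const_mul, integral_id_mul_pdf] at h1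
  exact h1

lemma cdf_tendsto_atBot : Tendsto stdNormalCDF atBot (𝓝 0) := by
  apply tendsto_of_tendsto_of_tendsto_of_le_of_le' tendsto_const_nhds pdf_tendsto_atBot
  · exact Eventually.of_forall cdf_nonneg
  · filter_upwards [eventually_le_atBot (-1 : ℝ)] with x hx
    have hx0 : x < 0 := by linarith
    refine (cdf_le_of_neg hx0).trans ?_
    rw [show x⁻¹ * -stdNormalPDF x = -stdNormalPDF x / x by ring, div_le_iff_of_neg hx0]
    nlinarith [pdf_pos x]

lemma x_cdf_tendsto_atBot : Tendsto (fun x => x * stdNormalCDF x) atBot (𝓝 0) := by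
  have hg : Tendsto (fun x => -stdNormalPDF x) atBot (𝓝 0) := by
    simpa using pdf_tendsto_atBot.neg
  apply tendsto_of_tendsto_of_tendsto_of_le_of_le' hg
    (tendsto_const_nhds : Tendsto (fun _ : ℝ => (0:ℝ)) atBot (𝓝 0))
  · filter_upwards [eventually_lt_atBot (0 : ℝ)] with x hx
    have hne : x ≠ 0 := ne_of_lt hx
    have h := mul_le_mul_of_nonpos_left (cdf_le_of_neg hx) hx.le
    rw [show x * (x⁻¹ * -stdNormalPDF x) = -stdNormalPDF x by
      rw [← mul_assoc, mul_inv_cancel₀ hne, one_mul]] at h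
    exact h
  · filter_upwards [eventually_le_atBot (0 : ℝ)] with x hx
    exact mul_nonpos_of_nonpos_of_nonneg hx (cdf_nonneg x)

lemma x2_cdf_tendsto_atBot : Tendsto (fun x => x ^ 2 * stdNormalCDF x) atBot (𝓝 0) := by
  have hg : Tendsto (fun x => -(x * stdNormalPDF x)) atBot (𝓝 0) := by
    simpa using x_pdf_tendsto_atBot.neg
  apply tendsto_of_tendsto_of_tendsto_of_le_of_le'
    (tendsto_const_nhds : Tendsto (fun _ : ℝ => (0:ℝ)) atBot (𝓝 0)) hg
  · filter_upwards with x
    exact mul_nonneg (sq_nonneg x) (cdf_nonneg x)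
  · filter_upwards [eventually_lt_atBot (0 : ℝ)] with x hx
    have hne : x ≠ 0 := ne_of_lt hx
    have h := mul_le_mul_of_nonneg_left (cdf_le_of_neg hx) (sq_nonneg x)
    rw [show x ^ 2 * (x⁻¹ * -stdNormalPDF x) = -(x * stdNormalPDF x) by
      field_simp] at h
    exact h

lemma cdf_hasDerivAt (x : ℝ) : HasDerivAt stdNormalCDF (stdNormalPDF x) x := by
  have heq : stdNormalCDF = fun y => stdNormalCDF 0 + ∫ t in (0:ℝ)..y, stdNormalPDF t := by
    funext y
    rw [← intervalIntegral.integral_Iic_sub_Iic pdf_integrable.integrableOn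
      pdf_integrable.integrableOn]
    unfold stdNormalCDF
    ring
  rw [heq]
  have hF : HasDerivAt (fun y => ∫ t in (0:ℝ)..y, stdNormalPDF t) (stdNormalPDF x) x := by
    apply intervalIntegral.integral_hasDerivAt_right
      pdf_integrable.intervalIntegrable
      ⟨univ, univ_mem, pdf_cont.aestronglyMeasurable.restrict⟩
      pdf_cont.continuousAt
  simpa using hF.const_add (stdNormalCDF 0)

lemma pos_of_deriv_pos_tendsto (f f' : ℝ → ℝ) (hd : ∀ x, HasDerivAt f (f' x) x)
    (hp : ∀ x, 0 < f' x) (hl : Tendsto f atBot (𝓝 0)) (x : ℝ) : 0 < f x := by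
  have hm : StrictMono f := strictMono_of_deriv_pos fun y => by
    rw [(hd y).deriv]; exact hp y
  have h1 : 0 ≤ f (x - 1) := by
    refine le_of_tendsto hl ?_
    filter_upwards [eventually_le_atBot (x - 1)] with z hz
    exact hm.monotone hz
  linarith [hm (show x - 1 < x by linarith)]

lemma cdf_pos (x : ℝ) : 0 < stdNormalCDF x :=
  pos_of_deriv_pos_tendsto _ _ cdf_hasDerivAt pdf_pos cdf_tendsto_atBot x

lemma h_hasDerivAt (x : ℝ) :
    HasDerivAt (fun x => stdNormalPDF x + x * stdNormalCDF x) (stdNormalCDF x) x := by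
  have h := (pdf_hasDerivAt x).add ((hasDerivAt_id x).mul (cdf_hasDerivAt x))
  refine h.congr_deriv ?_
  simp only [id_eq]
  ring

lemma h_pos (x : ℝ) : 0 < stdNormalPDF x + x * stdNormalCDF x := by
  apply pos_of_deriv_pos_tendsto _ stdNormalCDF h_hasDerivAt cdf_pos
  simpa using pdf_tendsto_atBot.add x_cdf_tendsto_atBot

lemma k_hasDerivAt (x : ℝ) :
    HasDerivAt (fun x => (1 + x ^ 2) * stdNormalCDF x + x * stdNormalPDF x)
      (2 * (stdNormalPDF x + x * stdNormalCDF x)) x := by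
  have h1 : HasDerivAt (fun x : ℝ => 1 + x ^ 2) (2 * x) x := by
    simpa using (hasDerivAt_pow 2 x).const_add 1
  have h := (h1.mul (cdf_hasDerivAt x)).add ((hasDerivAt_id x).mul (pdf_hasDerivAt x))
  refine h.congr_deriv ?_
  simp only [id_eq]
  ring

lemma k_pos (x : ℝ) : 0 < (1 + x ^ 2) * stdNormalCDF x + x * stdNormalPDF x := by
  refine pos_of_deriv_pos_tendsto _ _ k_hasDerivAt
    (fun y => by linarith [h_pos y]) ?_ x
  have h := (cdf_tendsto_atBot.add x2_cdf_tendsto_atBot).add x_pdf_tendsto_atBot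
  simp only [add_zero] at h
  exact h.congr fun x => by ring

lemma g_hasDerivAt (x : ℝ) :
    HasDerivAt (fun x => stdNormalCDF x ^ 2
      - stdNormalPDF x * (stdNormalPDF x + x * stdNormalCDF x))
      (stdNormalPDF x * ((1 + x ^ 2) * stdNormalCDF x + x * stdNormalPDF x)) x := by
  have h := ((cdf_hasDerivAt x).pow 2).sub
    ((pdf_hasDerivAt x).mul
      ((pdf_hasDerivAt x).add ((hasDerivAt_id x).mul (cdf_hasDerivAt x))))
  refine h.congr_deriv ?_
  simp only [id_eq, Pi.add_apply, Pi.mul_apply]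
  push_cast
  ring

lemma g_pos (x : ℝ) : 0 < stdNormalCDF x ^ 2
    - stdNormalPDF x * (stdNormalPDF x + x * stdNormalCDF x) := by
  refine pos_of_deriv_pos_tendsto _ _ g_hasDerivAt
    (fun y => mul_pos (pdf_pos y) (k_pos y)) ?_ x
  have h := (cdf_tendsto_atBot.pow 2).sub
    (pdf_tendsto_atBot.mul (pdf_tendsto_atBot.add x_cdf_tendsto_atBot))
  simpa using h

end MillsAux

/-- Inverse Mills ratio `𝒱(x) = φ(x)/Φ(x)`. -/
noncomputable def millsV (x : ℝ) : ℝ := stdNormalPDF x / stdNormalCDF x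

/-- `𝒲(x) = 𝒱(x)(𝒱(x) + x)`. -/
noncomputable def millsW (x : ℝ) : ℝ := millsV x * (millsV x + x)

/-- For all real `x`, `0 < 𝒲(x) < 1`. -/
theorem millsW_pos_lt_one : ∀ x : ℝ, 0 < millsW x ∧ millsW x < 1 := by
  intro x
  have hΦ := cdf_pos x
  have hW : millsW x = stdNormalPDF x * (stdNormalPDF x + x * stdNormalCDF x)
      / stdNormalCDF x ^ 2 := by
    unfold millsW millsV
    rw [div_add' _ _ _ hΦ.ne', div_mul_div_comm, ← sq]
  constructor
  · rw [hW]
    exact div_pos (mul_pos (pdf_pos x) (h_pos x)) (pow_pos hΦ 2)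
  · rw [hW, div_lt_one (pow_pos hΦ 2)]
    linarith [g_pos x]
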